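/- Let ε_1,…,ε_n be i.i.d. Rademacher random variables and let T be a finite nonempty subset of ℝ^n. Set v² = max_{t∈T} Σ_{i=1}^n t_i². Then E[ max_{t∈T} |Σ_{i=1}^n ε_i t_i| ] ≤ √( 2 log(2|T|) v² ). -/

import Mathlib

set_option maxHeartbeats 1000000

open MeasureTheory ProbabilityTheory Real

section helpers
variable {Ω : Type*} [MeasurableSpace Ω] {P : Measure Ω} [IsProbabilityMeasure P]

lemma integrable_of_ae_bound' {f : Ω → ℝ} (hf : Measurable f) {c : ℝ}
    (h : ∀ᵐ ω ∂P, |f ω| ≤ c) : Integrable f P :=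
  Integrable.mono' (integrable_const c) hf.aestronglyMeasurable
    (by simpa [Real.norm_eq_abs] using h)

lemma rademacher_ae_abs {e : Ω → ℝ} (hm : Measurable e)
    (h1 : P {ω | e ω = 1} = 1/2) (h2 : P {ω | e ω = -1} = 1/2) :
    ∀ᵐ ω ∂P, |e ω| = 1 := by
  have hA : MeasurableSet {ω | e ω = 1} := hm (measurableSet_singleton 1)
  have hB : MeasurableSet {ω | e ω = -1} := hm (measurableSet_singleton (-1))
  have hdisj : Disjoint {ω | e ω = 1} {ω | e ω = -1} := by
    rw [Set.disjoint_left]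
    rintro ω (h : e ω = 1) (h' : e ω = -1)
    norm_num [h] at h'
  have hU : P ({ω | e ω = 1} ∪ {ω | e ω = -1}) = 1 := by
    rw [measure_union hdisj hB, h1, h2]
    exact ENNReal.add_halves 1
  have h0 : P ({ω | e ω = 1} ∪ {ω | e ω = -1})ᶜ = 0 :=
    (prob_compl_eq_zero_iff (hA.union hB)).2 hU
  rw [ae_iff]
  refine measure_mono_null ?_ h0
  intro ω hω
  simp only [Set.mem_compl_iff, Set.mem_union, Set.mem_setOf_eq] at *
  rintro (h | h) <;> simp [h] at hω

lemma rademacher_mgf {e : Ω → ℝ} (hm : Measurable e)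
    (h1 : P {ω | e ω = 1} = 1/2) (h2 : P {ω | e ω = -1} = 1/2) (u : ℝ) :
    mgf e P u = Real.cosh u := by
  have hA : MeasurableSet {ω | e ω = 1} := hm (measurableSet_singleton 1)
  have hB : MeasurableSet {ω | e ω = -1} := hm (measurableSet_singleton (-1))
  have hae := rademacher_ae_abs hm h1 h2
  have hint : Integrable (fun ω => Real.exp (u * e ω)) P := by
    refine integrable_of_ae_bound' ((hm.const_mul u).exp) (c := Real.exp |u|) ?_
    filter_upwards [hae] with ω hω
    rw [abs_of_pos (Real.exp_pos _), Real.exp_le_exp]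
    calc u * e ω ≤ |u * e ω| := le_abs_self _
    _ = |u| := by rw [abs_mul, hω, mul_one]
  have hBc : ({ω | e ω = -1} : Set Ω) =ᵐ[P] ({ω | e ω = 1}ᶜ : Set Ω) := by
    refine Filter.eventuallyEq_set.mpr ?_
    filter_upwards [hae] with ω hω
    show (e ω = -1) ↔ ¬(e ω = 1)
    rcases abs_eq (by norm_num : (0:ℝ) ≤ 1) |>.mp hω with h | h <;> norm_num [h]
  have e1 : ∫ ω in {ω | e ω = 1}, Real.exp (u * e ω) ∂P
      = (1/2 : ℝ) * Real.exp u := by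
    rw [setIntegral_congr_fun hA (g := fun _ => Real.exp u)
      (fun ω hω => by simp [Set.mem_setOf_eq.mp hω]),
      setIntegral_const, measureReal_def, h1, smul_eq_mul]
    norm_num
  have e2 : ∫ ω in {ω | e ω = 1}ᶜ, Real.exp (u * e ω) ∂P
      = (1/2 : ℝ) * Real.exp (-u) := by
    rw [← setIntegral_congr_set (f := fun ω => Real.exp (u * e ω)) hBc,
      setIntegral_congr_fun hB (g := fun _ => Real.exp (-u))
      (fun ω hω => by simp [Set.mem_setOf_eq.mp hω]),
      setIntegral_const, measureReal_def, h2, smul_eq_mul]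
    norm_num
  have := integral_add_compl hA hint
  rw [mgf, ← this, e1, e2, Real.cosh_eq]
  ring


end helpers

/-- **Lemma 2**: let `ε₁, …, εₙ` be i.i.d. Rademacher random variables and `T` a finite
nonempty subset of `ℝⁿ`. With `v² = max_{t ∈ T} ∑ᵢ tᵢ²`,
`E[max_{t ∈ T} |∑ᵢ εᵢ tᵢ|] ≤ √(2 log(2 |T|) v²)`. -/
theorem rademacher_finite_max
    {Ω : Type*} [MeasurableSpace Ω] (P : Measure Ω) [IsProbabilityMeasure P]
    (n : ℕ) (ε : Fin n → Ω → ℝ)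
    (hεmeas : ∀ i, Measurable (ε i))
    (hεindep : iIndepFun ε P)
    (hεRad : ∀ i, P {ω | ε i ω = 1} = 1/2 ∧ P {ω | ε i ω = -1} = 1/2)
    (T : Finset (Fin n → ℝ)) (hT : T.Nonempty)
    (v2 : ℝ) (hv2 : v2 = ⨆ t : T, ∑ i, ((t : Fin n → ℝ) i)^2) :
    ∫ ω, (⨆ t : T, |∑ i, ε i ω * (t : Fin n → ℝ) i|) ∂P
      ≤ Real.sqrt (2 * Real.log (2 * T.card) * v2) := by
  classical
  haveI hne : Nonempty {x // x ∈ T} := ⟨⟨hT.choose, hT.choose_spec⟩⟩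
  set S : (Fin n → ℝ) → Ω → ℝ := fun t ω => ∑ i, ε i ω * t i with hSdef
  have hSmeas : ∀ t, Measurable (S t) := fun t =>
    Finset.measurable_sum _ fun i _ => (hεmeas i).mul_const _
  set M : Ω → ℝ := fun ω => ⨆ t : T, |S t ω| with hMdef
  have hMmeas : Measurable M := Measurable.iSup fun t => (hSmeas t).abs
  have hae : ∀ᵐ ω ∂P, ∀ i, |ε i ω| = 1 := by
    rw [ae_all_iff]
    exact fun i => rademacher_ae_abs (hεmeas i) (hεRad i).1 (hεRad i).2
  set C : ℝ := T.sup' hT (fun t => ∑ i, |t i|) with hCdef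
  have hC0 : 0 ≤ C := by
    rw [hCdef]
    exact le_trans (Finset.sum_nonneg fun i _ => abs_nonneg _)
      (Finset.le_sup' (fun t => ∑ i, |t i|) hT.choose_spec)
  have hSC : ∀ᵐ ω ∂P, ∀ t ∈ T, |S t ω| ≤ C := by
    filter_upwards [hae] with ω hω t ht
    calc |S t ω| ≤ ∑ i, |ε i ω * t i| := Finset.abs_sum_le_sum_abs _ _
    _ = ∑ i, |t i| := by
        refine Finset.sum_congr rfl fun i _ => ?_
        rw [abs_mul, hω i, one_mul]
    _ ≤ C := by rw [hCdef]; exact Finset.le_sup' (fun t => ∑ i, |t i|) ht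
  have hbdd : ∀ ω, BddAbove (Set.range fun t : T => |S t ω|) :=
    fun ω => (Set.finite_range _).bddAbove
  have hM0 : ∀ ω, 0 ≤ M ω :=
    fun ω => le_trans (abs_nonneg _) (le_ciSup (hbdd ω) ⟨hT.choose, hT.choose_spec⟩)
  have hMC : ∀ᵐ ω ∂P, M ω ≤ C := by
    filter_upwards [hSC] with ω hω
    exact ciSup_le fun t => hω t t.2
  have hMint : Integrable M P := by
    refine integrable_of_ae_bound' hMmeas (c := C) ?_
    filter_upwards [hMC] with ω h
    rw [abs_of_nonneg (hM0 ω)]; exact h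
  have hsum_le : ∀ t ∈ T, (∑ i, t i ^ 2) ≤ v2 := by
    intro t ht
    rw [hv2]
    exact le_ciSup (f := fun t : T => ∑ i, ((t : Fin n → ℝ) i)^2)
      ((Set.finite_range _).bddAbove) (⟨t, ht⟩ : T)
  have hv2nn : 0 ≤ v2 :=
    le_trans (Finset.sum_nonneg fun i _ => sq_nonneg _) (hsum_le _ hT.choose_spec)
  have hmgf : ∀ t ∈ T, ∀ c : ℝ, mgf (S t) P c ≤ Real.exp (c ^ 2 * v2 / 2) := by
    intro t ht c
    have hXindep : iIndepFun (fun i ω => ε i ω * t i) P :=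
      hεindep.comp (fun i x => x * t i) (fun i => measurable_id.mul_const _)
    have hXmeas : ∀ i : Fin n, Measurable fun ω => ε i ω * t i := fun i =>
      (hεmeas i).mul_const _
    have hSsum : S t = ∑ i, fun ω => ε i ω * t i := by
      funext ω; rw [Finset.sum_apply]
    rw [hSsum, hXindep.mgf_sum hXmeas]
    calc ∏ i, mgf (fun ω => ε i ω * t i) P c
        ≤ ∏ i, Real.exp ((c * t i) ^ 2 / 2) := by
          refine Finset.prod_le_prod (fun i _ => mgf_nonneg) (fun i _ => ?_)
          have h' : mgf (fun ω => ε i ω * t i) P c = mgf (ε i) P (c * t i) := by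
            simp only [mgf]
            congr 1; funext ω; ring_nf
          rw [h', rademacher_mgf (hεmeas i) (hεRad i).1 (hεRad i).2]
          exact Real.cosh_le_exp_half_sq _
    _ = Real.exp (∑ i, (c * t i) ^ 2 / 2) := by rw [Real.exp_sum]
    _ ≤ Real.exp (c ^ 2 * v2 / 2) := by
          rw [Real.exp_le_exp]
          have h'' : ∑ i, (c * t i) ^ 2 / 2 = c ^ 2 * (∑ i, t i ^ 2) / 2 := by
            rw [Finset.mul_sum, Finset.sum_div]
            exact Finset.sum_congr rfl fun i _ => by ring
          rw [h'']
          gcongr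
          exact hsum_le t ht
  set N : ℝ := (T.card : ℝ) with hNdef
  have hN1 : 1 ≤ N := by
    have h1 : 1 ≤ T.card := hT.card_pos
    rw [hNdef]
    exact_mod_cast h1
  set L := Real.log (2 * N) with hLdef
  have hL : 0 < L := Real.log_pos (by linarith)
  show ∫ ω, M ω ∂P ≤ Real.sqrt (2 * L * v2)
  rcases eq_or_lt_of_le hv2nn with hv20 | hv2pos
  · have hM00 : M = fun _ => 0 := by
      funext ω
      have hz : (fun t : T => |S t ω|) = fun _ => (0 : ℝ) := by
        funext t
        have h1 : (∑ j, (t : Fin n → ℝ) j ^ 2) ≤ 0 := hv20 ▸ hsum_le t t.2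
        have h2 : (0:ℝ) ≤ ∑ j, (t : Fin n → ℝ) j ^ 2 :=
          Finset.sum_nonneg fun j _ => sq_nonneg _
        have hz' : ∀ j, (t : Fin n → ℝ) j = 0 := fun j =>
          (pow_eq_zero_iff two_ne_zero).mp
            ((Finset.sum_eq_zero_iff_of_nonneg (fun j _ => sq_nonneg _)).1
              (le_antisymm h1 h2) j (Finset.mem_univ j))
        simp [hSdef, hz']
      rw [hMdef]
      simp only [hz, ciSup_const]
    rw [hM00, ← hv20]
    simp
  · set l : ℝ := Real.sqrt (2 * L / v2) with hldef
    have hlpos : 0 < l := Real.sqrt_pos.2 (by positivity)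
    have hl2 : l ^ 2 = 2 * L / v2 := Real.sq_sqrt (by positivity)
    have hexpint : ∀ t ∈ T, ∀ c : ℝ, Integrable (fun ω => Real.exp (c * S t ω)) P := by
      intro t ht c
      refine integrable_of_ae_bound' ((hSmeas t).const_mul c).exp (c := Real.exp (|c| * C)) ?_
      filter_upwards [hSC] with ω hω
      rw [abs_of_pos (Real.exp_pos _), Real.exp_le_exp]
      calc c * S t ω ≤ |c * S t ω| := le_abs_self _
        _ = |c| * |S t ω| := abs_mul _ _
        _ ≤ |c| * C := mul_le_mul_of_nonneg_left (hω t ht) (abs_nonneg c)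
    have hexpMint : Integrable (fun ω => Real.exp (l * M ω)) P := by
      refine integrable_of_ae_bound' (hMmeas.const_mul l).exp (c := Real.exp (l * C)) ?_
      filter_upwards [hMC] with ω hω
      rw [abs_of_pos (Real.exp_pos _), Real.exp_le_exp]
      exact mul_le_mul_of_nonneg_left hω hlpos.le
    have hJensen : Real.exp (l * ∫ ω, M ω ∂P) ≤ ∫ ω, Real.exp (l * M ω) ∂P := by
      have h := (convexOn_exp).map_integral_le (Real.continuous_exp.continuousOn)
        isClosed_univ (Filter.Eventually.of_forall fun ω => Set.mem_univ _)
        (hMint.const_mul l) hexpMint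
      rwa [integral_const_mul] at h
    have hpoint : ∀ ω, Real.exp (l * M ω) ≤
        ∑ t ∈ T, (Real.exp (l * S t ω) + Real.exp (-l * S t ω)) := by
      intro ω
      obtain ⟨t₀, ht₀⟩ := Finite.exists_max fun t : T => |S t ω|
      have hMle : M ω ≤ |S (t₀ : Fin n → ℝ) ω| := ciSup_le ht₀
      have h1 : Real.exp (l * M ω) ≤ Real.exp (l * |S (t₀ : Fin n → ℝ) ω|) := by
        rw [Real.exp_le_exp]; exact mul_le_mul_of_nonneg_left hMle hlpos.le
      have h2 : Real.exp (l * |S (t₀ : Fin n → ℝ) ω|)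
          ≤ Real.exp (l * S (t₀ : Fin n → ℝ) ω) + Real.exp (-l * S (t₀ : Fin n → ℝ) ω) := by
        rcases abs_cases (S (t₀ : Fin n → ℝ) ω) with ⟨h, _⟩ | ⟨h, _⟩
        · rw [h]
          nlinarith [Real.exp_pos (-l * S (t₀ : Fin n → ℝ) ω)]
        · rw [h, show l * -(S (t₀ : Fin n → ℝ) ω) = -l * S (t₀ : Fin n → ℝ) ω from by ring]
          nlinarith [Real.exp_pos (l * S (t₀ : Fin n → ℝ) ω)]
      refine h1.trans (h2.trans ?_)
      exact Finset.single_le_sum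
        (f := fun t => Real.exp (l * S t ω) + Real.exp (-l * S t ω))
        (fun t _ => by positivity) t₀.2
    have hsum_int : Integrable
        (fun ω => ∑ t ∈ T, (Real.exp (l * S t ω) + Real.exp (-l * S t ω))) P :=
      integrable_finset_sum _ fun t ht => (hexpint t ht l).add (hexpint t ht (-l))
    have hstep2 : ∫ ω, Real.exp (l * M ω) ∂P ≤ N * (2 * Real.exp (l ^ 2 * v2 / 2)) := by
      calc ∫ ω, Real.exp (l * M ω) ∂P
          ≤ ∫ ω, ∑ t ∈ T, (Real.exp (l * S t ω) + Real.exp (-l * S t ω)) ∂P :=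
            integral_mono hexpMint hsum_int hpoint
        _ = ∑ t ∈ T, ((mgf (S t) P l) + (mgf (S t) P (-l))) := by
            rw [integral_finset_sum (f := fun t ω => Real.exp (l * S t ω) + Real.exp (-l * S t ω))
              T (fun t ht => (hexpint t ht l).add (hexpint t ht (-l)))]
            refine Finset.sum_congr rfl fun t ht => ?_
            rw [integral_add (hexpint t ht l) (hexpint t ht (-l))]
            rfl
        _ ≤ ∑ t ∈ T, (Real.exp (l ^ 2 * v2 / 2) + Real.exp (l ^ 2 * v2 / 2)) := by
            refine Finset.sum_le_sum fun t ht => ?_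
            have h1 := hmgf t ht l
            have h2 := hmgf t ht (-l)
            rw [neg_pow_two] at h2
            exact add_le_add h1 h2
        _ = N * (2 * Real.exp (l ^ 2 * v2 / 2)) := by
            rw [Finset.sum_const, nsmul_eq_mul]
            ring
    have hkey : Real.exp (l * ∫ ω, M ω ∂P) ≤ 2 * N * Real.exp (l ^ 2 * v2 / 2) := by
      refine hJensen.trans (hstep2.trans (le_of_eq (by ring)))
    have hlog : l * ∫ ω, M ω ∂P ≤ L + l ^ 2 * v2 / 2 := by
      have h2N : (0:ℝ) < 2 * N := by linarith
      have h := Real.log_le_log (Real.exp_pos _) hkey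
      rwa [Real.log_exp, Real.log_mul h2N.ne' (Real.exp_ne_zero _), Real.log_exp,
        ← hLdef] at h
    have hlv : l ^ 2 * v2 = 2 * L := by
      rw [hl2]; field_simp
    have hfinal : ∫ ω, M ω ∂P ≤ l * v2 := by
      have h1 : l * ∫ ω, M ω ∂P ≤ l * (l * v2) := by
        calc l * ∫ ω, M ω ∂P ≤ L + l ^ 2 * v2 / 2 := hlog
          _ = l ^ 2 * v2 := by linarith
          _ = l * (l * v2) := by ring
      exact le_of_mul_le_mul_left h1 hlpos
    have hrhs : Real.sqrt (2 * L * v2) = l * v2 := by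
      have heq : 2 * L * v2 = (l * v2) ^ 2 := by
        rw [mul_pow, hl2]
        field_simp
      rw [heq, Real.sqrt_sq (by positivity)]
    rw [hrhs]
    exact hfinal
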